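/- For every nonnegative measurable function h : ℝ^d × ℝ^d → [0,∞), the following change-of-variables identity holds (as an equality in [0,∞]): ∫∫ λ(x,v) h(x, R(x)v) π(x) ψ(v) dx dv = ∫∫ λ(x, R(x)v) h(x,v) π(x) ψ(v) dx dv. -/

import Mathlib

open scoped RealInnerProductSpace ENNReal
open MeasureTheory

/-- Change-of-variables identity for the BPS bounce operator. For every
nonnegative measurable `h`, in `[0,∞]`:
`∫∫ λ(x,v) h(x, R(x)v) π(x) ψ(v) dx dv = ∫∫ λ(x, R(x)v) h(x,v) π(x) ψ(v) dx dv`. -/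
theorem bps_bounce_change_of_variables {d : ℕ}
    (U : EuclideanSpace ℝ (Fin d) → ℝ) (hU : ContDiff ℝ 1 U)
    (Z : ℝ) (hZ : Z = ∫ x : EuclideanSpace ℝ (Fin d), Real.exp (-U x))
    (hZpos : 0 < Z)
    (hZfin : Integrable fun x : EuclideanSpace ℝ (Fin d) => Real.exp (-U x))
    (p : EuclideanSpace ℝ (Fin d) → ℝ) (hp : ∀ x, p x = Real.exp (-U x) / Z)
    (ψ : EuclideanSpace ℝ (Fin d) → ℝ)
    (hψ : ∀ v, ψ v = (2 * Real.pi) ^ (-(d : ℝ) / 2) * Real.exp (-‖v‖ ^ 2 / 2))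
    (lam : EuclideanSpace ℝ (Fin d) → EuclideanSpace ℝ (Fin d) → ℝ)
    (hlam : ∀ x v, lam x v = max 0 ⟪gradient U x, v⟫)
    (R : EuclideanSpace ℝ (Fin d) → EuclideanSpace ℝ (Fin d) → EuclideanSpace ℝ (Fin d))
    (hR0 : ∀ x v, gradient U x = 0 → R x v = v)
    (hR1 : ∀ x v, gradient U x ≠ 0 →
      R x v = v - (2 * ⟪gradient U x, v⟫ / ‖gradient U x‖ ^ 2) • gradient U x)
    (h : EuclideanSpace ℝ (Fin d) × EuclideanSpace ℝ (Fin d) → ℝ)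
    (hmeas : Measurable h) (hnonneg : ∀ z, 0 ≤ h z) :
    ∫⁻ x : EuclideanSpace ℝ (Fin d), ∫⁻ v : EuclideanSpace ℝ (Fin d),
        ENNReal.ofReal (lam x v * h (x, R x v) * (p x * ψ v)) =
    ∫⁻ x : EuclideanSpace ℝ (Fin d), ∫⁻ v : EuclideanSpace ℝ (Fin d),
        ENNReal.ofReal (lam x (R x v) * h (x, v) * (p x * ψ v)) := by
  refine lintegral_congr fun x => ?_
  by_cases hx : gradient U x = 0
  · refine lintegral_congr fun v => ?_
    rw [hR0 x v hx]
  · set u := gradient U x with hu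
    set T : EuclideanSpace ℝ (Fin d) ≃ₗᵢ[ℝ] EuclideanSpace ℝ (Fin d) :=
      Submodule.reflection ((ℝ ∙ u)ᗮ) with hT
    have hTval : ∀ v, T v = R x v := by
      intro v
      rw [hR1 x v hx, ← hu, hT, Submodule.reflection_orthogonal_apply, Submodule.reflection_singleton_apply]
      push_cast
      rw [neg_sub]
      congr 1
      rw [two_smul, ← add_smul]
      congr 1
      simp only [RCLike.ofReal_real_eq_id, id_eq]
      ring
    have hTT : ∀ v, T (T v) = v := fun v => Submodule.reflection_reflection _ v
    have hψT : ∀ v, ψ (T v) = ψ v := by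
      intro v; rw [hψ, hψ, T.norm_map]
    -- the function on the RHS
    set G : EuclideanSpace ℝ (Fin d) → ℝ≥0∞ :=
      fun v => ENNReal.ofReal (lam x (R x v) * h (x, v) * (p x * ψ v)) with hG
    have hGmeas : Measurable G := by
      apply Measurable.ennreal_ofReal
      apply Measurable.mul
      apply Measurable.mul
      · have : (fun v => lam x (R x v)) = fun v => max 0 ⟪u, T v⟫ := by
          funext v; rw [← hTval, hlam]
        rw [this]
        exact (measurable_const.max
          ((continuous_const.inner T.continuous).measurable))
      · exact hmeas.comp (measurable_const.prodMk measurable_id)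
      · apply Measurable.mul measurable_const
        have : ψ = fun v => (2 * Real.pi) ^ (-(d : ℝ) / 2) * Real.exp (-‖v‖ ^ 2 / 2) := by
          funext v; exact hψ v
        rw [this]
        exact (continuous_const.mul (((continuous_norm.pow 2).neg.div_const 2).rexp)).measurable
    have key : ∫⁻ v, G (T v) = ∫⁻ v, G v := T.measurePreserving.lintegral_comp hGmeas
    calc ∫⁻ v, ENNReal.ofReal (lam x v * h (x, R x v) * (p x * ψ v))
        = ∫⁻ v, G (T v) := by
          refine lintegral_congr fun v => ?_
          have hRR : R x (R x v) = v := by rw [← hTval, ← hTval]; exact hTT v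
          show _ = ENNReal.ofReal (lam x (R x (T v)) * h (x, T v) * (p x * ψ (T v)))
          rw [hψT, hTval, hRR]
      _ = ∫⁻ v, G v := key
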